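/- arXiv:math/0204280 — 2 statements merged into one kernel-verified Lean document; each statement's English description precedes it below -/
import Mathlib

section
/- Let (T, m_T, 1_T, μ_T, θ_T) be an A-torsor. If T is commutative as an algebra (m_T = m_T^op), or if the law μ_T is commutative (μ_T = μ_T^op := τ_(13)∘μ_T), then θ_T = Id_T. -/
/- Common setup: quantum torsors following Grunspan, "Quantum torsors".
   `T` is an `A`-algebra; the torsor law is an algebra morphism
   `μ : T → T ⊗[A] (Tᵐᵒᵖ ⊗[A] T)` and `θ : T → T` is an algebra automorphism. -/

open scoped TensorProduct
open TensorProduct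

namespace QT

variable (A : Type*) [CommRing A] (T : Type*) [Ring T] [Algebra A T]

/-- `unop` as an `A`-linear map. -/
noncomputable def unopL : Tᵐᵒᵖ →ₗ[A] T :=
  (MulOpposite.opLinearEquiv A : T ≃ₗ[A] Tᵐᵒᵖ).symm.toLinearMap

/-- `op` as an `A`-linear map. -/
noncomputable def opL : T →ₗ[A] Tᵐᵒᵖ :=
  (MulOpposite.opLinearEquiv A : T ≃ₗ[A] Tᵐᵒᵖ).toLinearMap

/-- multiplication of `T` as a linear map. -/
noncomputable def mulTT : T ⊗[A] T →ₗ[A] T := LinearMap.mul' A T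

/-- multiplication `Tᵐᵒᵖ ⊗ T → T`, forgetting the `op`s. -/
noncomputable def mulOT : Tᵐᵒᵖ ⊗[A] T →ₗ[A] T :=
  mulTT A T ∘ₗ map (unopL A T) LinearMap.id

/-- multiplication `T ⊗ Tᵐᵒᵖ → T`, forgetting the `op`s. -/
noncomputable def mulTO : T ⊗[A] Tᵐᵒᵖ →ₗ[A] T :=
  mulTT A T ∘ₗ map LinearMap.id (unopL A T)

/-- the permutation `τ₍₁₃₎` of the outer factors of `T ⊗ Tᵐᵒᵖ ⊗ T`. -/
noncomputable def tau13 : T ⊗[A] (Tᵐᵒᵖ ⊗[A] T) ≃ₗ[A] T ⊗[A] (Tᵐᵒᵖ ⊗[A] T) :=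
  TensorProduct.congr (LinearEquiv.refl A T) (TensorProduct.comm A Tᵐᵒᵖ T) ≪≫ₗ
  (TensorProduct.assoc A T T Tᵐᵒᵖ).symm ≪≫ₗ
  TensorProduct.congr (TensorProduct.comm A T T) (LinearEquiv.refl A Tᵐᵒᵖ) ≪≫ₗ
  TensorProduct.assoc A T T Tᵐᵒᵖ ≪≫ₗ
  TensorProduct.congr (LinearEquiv.refl A T) (TensorProduct.comm A T Tᵐᵒᵖ)

/-- exchange the `op` pattern `T ⊗ Tᵐᵒᵖ ⊗ T ↦ Tᵐᵒᵖ ⊗ T ⊗ Tᵐᵒᵖ` (identity on elements). -/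
noncomputable def oppify : T ⊗[A] (Tᵐᵒᵖ ⊗[A] T) →ₗ[A] Tᵐᵒᵖ ⊗[A] (T ⊗[A] Tᵐᵒᵖ) :=
  map (opL A T) (map (unopL A T) (opL A T))

/-- `μᵒᵖ := τ₍₁₃₎ ∘ μ` applied to an element of `Tᵐᵒᵖ`, with the `op`-pattern adjusted. -/
noncomputable def muopO (μ : T →ₗ[A] T ⊗[A] (Tᵐᵒᵖ ⊗[A] T)) :
    Tᵐᵒᵖ →ₗ[A] Tᵐᵒᵖ ⊗[A] (T ⊗[A] Tᵐᵒᵖ) :=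
  oppify A T ∘ₗ (tau13 A T).toLinearMap ∘ₗ μ ∘ₗ unopL A T

/-- `θ` viewed as a map of `Tᵐᵒᵖ`. -/
noncomputable def thetaOp (θ : T →ₗ[A] T) : Tᵐᵒᵖ →ₗ[A] Tᵐᵒᵖ :=
  opL A T ∘ₗ θ ∘ₗ unopL A T

/-- multiplication of the first two factors of `T ⊗ Tᵐᵒᵖ ⊗ T`. -/
noncomputable def m12 : T ⊗[A] (Tᵐᵒᵖ ⊗[A] T) →ₗ[A] T ⊗[A] T :=
  map (mulTO A T) LinearMap.id ∘ₗ (TensorProduct.assoc A T Tᵐᵒᵖ T).symm.toLinearMap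

/-- `Id ⊗ Id ⊗ μ` on `T ⊗ Tᵐᵒᵖ ⊗ T`. -/
noncomputable def mu3 (μ : T →ₗ[A] T ⊗[A] (Tᵐᵒᵖ ⊗[A] T)) :
    T ⊗[A] (Tᵐᵒᵖ ⊗[A] T) →ₗ[A] T ⊗[A] (Tᵐᵒᵖ ⊗[A] (T ⊗[A] (Tᵐᵒᵖ ⊗[A] T))) :=
  map LinearMap.id (map LinearMap.id μ)

/-- `μ ⊗ Id ⊗ Id` on `T ⊗ Tᵐᵒᵖ ⊗ T` (suitably reassociated). -/
noncomputable def mu1 (μ : T →ₗ[A] T ⊗[A] (Tᵐᵒᵖ ⊗[A] T)) :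
    T ⊗[A] (Tᵐᵒᵖ ⊗[A] T) →ₗ[A] T ⊗[A] (Tᵐᵒᵖ ⊗[A] (T ⊗[A] (Tᵐᵒᵖ ⊗[A] T))) :=
  map LinearMap.id (TensorProduct.assoc A Tᵐᵒᵖ T (Tᵐᵒᵖ ⊗[A] T)).toLinearMap ∘ₗ
  (TensorProduct.assoc A T (Tᵐᵒᵖ ⊗[A] T) (Tᵐᵒᵖ ⊗[A] T)).toLinearMap ∘ₗ
  map μ LinearMap.id

/-- `θ` applied to the third of five tensor factors. -/
noncomputable def theta3 (θ : T →ₗ[A] T) :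
    T ⊗[A] (Tᵐᵒᵖ ⊗[A] (T ⊗[A] (Tᵐᵒᵖ ⊗[A] T))) →ₗ[A] T ⊗[A] (Tᵐᵒᵖ ⊗[A] (T ⊗[A] (Tᵐᵒᵖ ⊗[A] T))) :=
  map LinearMap.id (map LinearMap.id (map θ LinearMap.id))

/-- `Id ⊗ μᵒᵖ ⊗ Id` on `T ⊗ Tᵐᵒᵖ ⊗ T`. -/
noncomputable def muMid (μ : T →ₗ[A] T ⊗[A] (Tᵐᵒᵖ ⊗[A] T)) :
    T ⊗[A] (Tᵐᵒᵖ ⊗[A] T) →ₗ[A] T ⊗[A] (Tᵐᵒᵖ ⊗[A] (T ⊗[A] (Tᵐᵒᵖ ⊗[A] T))) :=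
  map LinearMap.id
    (map LinearMap.id (TensorProduct.assoc A T Tᵐᵒᵖ T).toLinearMap ∘ₗ
     (TensorProduct.assoc A Tᵐᵒᵖ (T ⊗[A] Tᵐᵒᵖ) T).toLinearMap ∘ₗ
     map (muopO A T μ) LinearMap.id)

/-- Grunspan's axioms for a quantum torsor `(T, m_T, 1_T, μ, θ)` (Definition 2.1). -/
structure IsTorsor (μ : T →ₗ[A] T ⊗[A] (Tᵐᵒᵖ ⊗[A] T)) (θ : T →ₗ[A] T) : Prop where
  /-- `μ` is an algebra morphism into `T ⊗ Tᵒᵖ ⊗ T`: unitality -/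
  map_one : μ 1 = 1
  /-- `μ` is an algebra morphism into `T ⊗ Tᵒᵖ ⊗ T`: multiplicativity -/
  map_mul : ∀ x y : T, μ (x * y) = μ x * μ y
  /-- `θ` is an algebra automorphism -/
  theta_one : θ 1 = 1
  theta_mul : ∀ x y : T, θ (x * y) = θ x * θ y
  theta_bij : Function.Bijective θ
  /-- `(Id ⊗ m) ∘ μ (x) = x ⊗ 1` -/
  left_law : ∀ x : T, map LinearMap.id (mulOT A T) (μ x) = x ⊗ₜ[A] (1 : T)
  /-- `(m ⊗ Id) ∘ μ (x) = 1 ⊗ x` -/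
  right_law : ∀ x : T, m12 A T (μ x) = (1 : T) ⊗ₜ[A] x
  /-- `(Id ⊗ Id ⊗ μ) ∘ μ = (μ ⊗ Id ⊗ Id) ∘ μ` -/
  coassoc : ∀ x : T, mu3 A T μ (μ x) = mu1 A T μ (μ x)
  /-- `θ⁽³⁾ ∘ (μ ⊗ Id ⊗ Id) ∘ μ = (Id ⊗ μᵒᵖ ⊗ Id) ∘ μ` -/
  theta_law : ∀ x : T, theta3 A T θ (mu1 A T μ (μ x)) = muMid A T μ (μ x)
  /-- `(θ ⊗ θ ⊗ θ) ∘ μ = μ ∘ θ` -/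
  theta_compat : ∀ x : T, map θ (map (thetaOp A T θ) θ) (μ x) = μ (θ x)

/-- multiplication of all five factors of `T ⊗ Tᵐᵒᵖ ⊗ T ⊗ Tᵐᵒᵖ ⊗ T`, in order, in `T`. -/
noncomputable def mult5 : T ⊗[A] (Tᵐᵒᵖ ⊗[A] (T ⊗[A] (Tᵐᵒᵖ ⊗[A] T))) →ₗ[A] T :=
  mulTT A T ∘ₗ
    map LinearMap.id
      (mulOT A T ∘ₗ map LinearMap.id (mulTT A T ∘ₗ map LinearMap.id (mulOT A T)))

/-- the law `μᵒᵖ = τ₍₁₃₎ ∘ μ` of the opposite torsor, as a map on `Tᵐᵒᵖ`. -/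
noncomputable def muOpp (μ : T →ₗ[A] T ⊗[A] (Tᵐᵒᵖ ⊗[A] T)) :
    Tᵐᵒᵖ →ₗ[A] Tᵐᵒᵖ ⊗[A] (Tᵐᵒᵖᵐᵒᵖ ⊗[A] Tᵐᵒᵖ) :=
  map (opL A T) (map (opL A Tᵐᵒᵖ) (opL A T)) ∘ₗ (tau13 A T).toLinearMap ∘ₗ μ ∘ₗ unopL A T

/-- the defining condition of `H_l(T)`: left-hand side. -/
noncomputable def lmapL (μ : T →ₗ[A] T ⊗[A] (Tᵐᵒᵖ ⊗[A] T)) (θ : T →ₗ[A] T) :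
    T ⊗[A] Tᵐᵒᵖ →ₗ[A] T ⊗[A] (Tᵐᵒᵖ ⊗[A] (T ⊗[A] Tᵐᵒᵖ)) :=
  map LinearMap.id (map LinearMap.id (map θ LinearMap.id)) ∘ₗ
  map LinearMap.id (TensorProduct.assoc A Tᵐᵒᵖ T Tᵐᵒᵖ).toLinearMap ∘ₗ
  (TensorProduct.assoc A T (Tᵐᵒᵖ ⊗[A] T) Tᵐᵒᵖ).toLinearMap ∘ₗ
  map μ LinearMap.id

/-- the defining condition of `H_l(T)`: right-hand side `(Id ⊗ μᵒᵖ)`. -/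
noncomputable def rmapL (μ : T →ₗ[A] T ⊗[A] (Tᵐᵒᵖ ⊗[A] T)) :
    T ⊗[A] Tᵐᵒᵖ →ₗ[A] T ⊗[A] (Tᵐᵒᵖ ⊗[A] (T ⊗[A] Tᵐᵒᵖ)) :=
  map LinearMap.id (muopO A T μ)

/-- the subspace `H_l(T) ⊆ T ⊗ Tᵐᵒᵖ`. -/
noncomputable def Hl (μ : T →ₗ[A] T ⊗[A] (Tᵐᵒᵖ ⊗[A] T)) (θ : T →ₗ[A] T) :
    Submodule A (T ⊗[A] Tᵐᵒᵖ) :=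
  LinearMap.eqLocus (lmapL A T μ θ) (rmapL A T μ)

/-- the defining condition of `H_r(T)`: left-hand side. -/
noncomputable def lmapR (μ : T →ₗ[A] T ⊗[A] (Tᵐᵒᵖ ⊗[A] T)) (θ : T →ₗ[A] T) :
    Tᵐᵒᵖ ⊗[A] T →ₗ[A] Tᵐᵒᵖ ⊗[A] (T ⊗[A] (Tᵐᵒᵖ ⊗[A] T)) :=
  map LinearMap.id (map θ LinearMap.id) ∘ₗ map LinearMap.id μ

/-- the defining condition of `H_r(T)`: right-hand side `(μᵒᵖ ⊗ Id)`. -/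
noncomputable def rmapR (μ : T →ₗ[A] T ⊗[A] (Tᵐᵒᵖ ⊗[A] T)) :
    Tᵐᵒᵖ ⊗[A] T →ₗ[A] Tᵐᵒᵖ ⊗[A] (T ⊗[A] (Tᵐᵒᵖ ⊗[A] T)) :=
  map LinearMap.id (TensorProduct.assoc A T Tᵐᵒᵖ T).toLinearMap ∘ₗ
  (TensorProduct.assoc A Tᵐᵒᵖ (T ⊗[A] Tᵐᵒᵖ) T).toLinearMap ∘ₗ
  map (muopO A T μ) LinearMap.id

/-- the subspace `H_r(T) ⊆ Tᵐᵒᵖ ⊗ T`. -/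
noncomputable def Hr (μ : T →ₗ[A] T ⊗[A] (Tᵐᵒᵖ ⊗[A] T)) (θ : T →ₗ[A] T) :
    Submodule A (Tᵐᵒᵖ ⊗[A] T) :=
  LinearMap.eqLocus (lmapR A T μ θ) (rmapR A T μ)

/-- comultiplication `(μ ⊗ Id)` of `H_l(T)`, on the ambient space. -/
noncomputable def deltaL (μ : T →ₗ[A] T ⊗[A] (Tᵐᵒᵖ ⊗[A] T)) :
    T ⊗[A] Tᵐᵒᵖ →ₗ[A] (T ⊗[A] Tᵐᵒᵖ) ⊗[A] (T ⊗[A] Tᵐᵒᵖ) :=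
  (TensorProduct.assoc A T Tᵐᵒᵖ (T ⊗[A] Tᵐᵒᵖ)).symm.toLinearMap ∘ₗ
  map LinearMap.id (TensorProduct.assoc A Tᵐᵒᵖ T Tᵐᵒᵖ).toLinearMap ∘ₗ
  (TensorProduct.assoc A T (Tᵐᵒᵖ ⊗[A] T) Tᵐᵒᵖ).toLinearMap ∘ₗ
  map μ LinearMap.id

/-- `x ↦ ε(x) • 1` for `H_l(T)`, i.e. `x ↦ m_T(x) ⊗ 1`. -/
noncomputable def epsL : T ⊗[A] Tᵐᵒᵖ →ₗ[A] T ⊗[A] Tᵐᵒᵖ :=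
  (TensorProduct.mk A T Tᵐᵒᵖ).flip 1 ∘ₗ mulTO A T

/-- antipode `x ↦ τ₍₁₂₎ ((Id ⊗ θ) x)` of `H_l(T)`, on the ambient space. -/
noncomputable def antipodeL (θ : T →ₗ[A] T) : T ⊗[A] Tᵐᵒᵖ →ₗ[A] T ⊗[A] Tᵐᵒᵖ :=
  map (unopL A T) (opL A T) ∘ₗ (TensorProduct.comm A T Tᵐᵒᵖ).toLinearMap ∘ₗ
  map LinearMap.id (thetaOp A T θ)

/-- comultiplication `(Id ⊗ μ)` of `H_r(T)`, on the ambient space. -/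
noncomputable def deltaR (μ : T →ₗ[A] T ⊗[A] (Tᵐᵒᵖ ⊗[A] T)) :
    Tᵐᵒᵖ ⊗[A] T →ₗ[A] (Tᵐᵒᵖ ⊗[A] T) ⊗[A] (Tᵐᵒᵖ ⊗[A] T) :=
  (TensorProduct.assoc A Tᵐᵒᵖ T (Tᵐᵒᵖ ⊗[A] T)).symm.toLinearMap ∘ₗ map LinearMap.id μ

/-- `x ↦ ε(x) • 1` for `H_r(T)`. -/
noncomputable def epsR : Tᵐᵒᵖ ⊗[A] T →ₗ[A] Tᵐᵒᵖ ⊗[A] T :=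
  TensorProduct.mk A Tᵐᵒᵖ T 1 ∘ₗ mulOT A T

/-- antipode of `H_r(T)`, on the ambient space. -/
noncomputable def antipodeR (θ : T →ₗ[A] T) : Tᵐᵒᵖ ⊗[A] T →ₗ[A] Tᵐᵒᵖ ⊗[A] T :=
  map (opL A T) (unopL A T) ∘ₗ (TensorProduct.comm A Tᵐᵒᵖ T).toLinearMap ∘ₗ
  map (thetaOp A T θ) LinearMap.id

/-- `H` is a sub-Hopf-algebra of the `A`-algebra `B` with respect to comultiplication `Δ`,
`unit∘counit = e` and antipode `S` (all given as maps of the ambient algebra; `e x = ε(x) • 1`). -/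
structure IsHopfOn (B : Type*) [Ring B] [Algebra A B] (H : Submodule A B)
    (Δ : B →ₗ[A] B ⊗[A] B) (e : B →ₗ[A] B) (S : B →ₗ[A] B) : Prop where
  one_mem : (1 : B) ∈ H
  mul_mem : ∀ x ∈ H, ∀ y ∈ H, x * y ∈ H
  comul_mem : ∀ x ∈ H, Δ x ∈ LinearMap.range (map H.subtype H.subtype)
  antipode_mem : ∀ x ∈ H, S x ∈ H
  counit_scalar : ∀ x ∈ H, ∃ a : A, e x = a • (1 : B)
  comul_one : Δ 1 = (1 : B) ⊗ₜ[A] (1 : B)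
  comul_mul : ∀ x ∈ H, ∀ y ∈ H, Δ (x * y) = Δ x * Δ y
  counit_one : e 1 = 1
  counit_mul : ∀ x ∈ H, ∀ y ∈ H, e (x * y) = e x * e y
  coassoc : ∀ x ∈ H, map Δ LinearMap.id (Δ x)
      = (TensorProduct.assoc A B B B).symm (map LinearMap.id Δ (Δ x))
  counit_left : ∀ x ∈ H, LinearMap.mul' A B (map e LinearMap.id (Δ x)) = x
  counit_right : ∀ x ∈ H, LinearMap.mul' A B (map LinearMap.id e (Δ x)) = x
  antipode_left : ∀ x ∈ H, LinearMap.mul' A B (map S LinearMap.id (Δ x)) = e x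
  antipode_right : ∀ x ∈ H, LinearMap.mul' A B (map LinearMap.id S (Δ x)) = e x

/-- `φ` restricts to an isomorphism of Hopf algebras between the sub-Hopf-algebra `H` of `B`
(with structure maps `Δ, e, S`) and the sub-Hopf-algebra `H'` of `B'` (with `Δ', e', S'`). -/
structure IsHopfIso {B : Type*} [Ring B] [Algebra A B] {B' : Type*} [Ring B'] [Algebra A B']
    (H : Submodule A B) (Δ : B →ₗ[A] B ⊗[A] B) (e : B →ₗ[A] B) (S : B →ₗ[A] B)
    (H' : Submodule A B') (Δ' : B' →ₗ[A] B' ⊗[A] B') (e' : B' →ₗ[A] B') (S' : B' →ₗ[A] B')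
    (φ : B →ₗ[A] B') : Prop where
  maps_to : ∀ x ∈ H, φ x ∈ H'
  inj : Set.InjOn φ (H : Set B)
  surj : ∀ y ∈ H', ∃ x ∈ H, φ x = y
  map_one : φ 1 = 1
  map_mul : ∀ x ∈ H, ∀ y ∈ H, φ (x * y) = φ x * φ y
  comul_comp : ∀ x ∈ H, map φ φ (Δ x) = Δ' (φ x)
  counit_comp : ∀ x ∈ H, φ (e x) = e' (φ x)
  antipode_comp : ∀ x ∈ H, φ (S x) = S' (φ x)

/-- the left coaction: `μ` with its target reassociated as `(T ⊗ Tᵐᵒᵖ) ⊗ T`. -/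
noncomputable def rhoL (μ : T →ₗ[A] T ⊗[A] (Tᵐᵒᵖ ⊗[A] T)) :
    T →ₗ[A] (T ⊗[A] Tᵐᵒᵖ) ⊗[A] T :=
  (TensorProduct.assoc A T Tᵐᵒᵖ T).symm.toLinearMap ∘ₗ μ

/-- `(ε ⊗ Id)`-contraction for the left coaction. -/
noncomputable def collapseL : (T ⊗[A] Tᵐᵒᵖ) ⊗[A] T →ₗ[A] T :=
  mulTT A T ∘ₗ map (mulTO A T) LinearMap.id

/-- `(Id ⊗ ε)`-contraction for the right coaction. -/
noncomputable def collapseR : T ⊗[A] (Tᵐᵒᵖ ⊗[A] T) →ₗ[A] T :=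
  mulTT A T ∘ₗ map LinearMap.id (mulOT A T)

/-- forget the `op` on the second factor. -/
noncomputable def forgetL : T ⊗[A] Tᵐᵒᵖ ≃ₗ[A] T ⊗[A] T :=
  TensorProduct.congr (LinearEquiv.refl A T) (MulOpposite.opLinearEquiv A : T ≃ₗ[A] Tᵐᵒᵖ).symm

/-- forget the `op` on the first factor. -/
noncomputable def forgetR : Tᵐᵒᵖ ⊗[A] T ≃ₗ[A] T ⊗[A] T :=
  TensorProduct.congr (MulOpposite.opLinearEquiv A : T ≃ₗ[A] Tᵐᵒᵖ).symm (LinearEquiv.refl A T)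

end QT

section ThetaAux

open QT

variable (A : Type*) [CommRing A] (T : Type*) [Ring T] [Algebra A T]

@[simp] lemma QTaux_mulTT_tmul (a b : T) : mulTT A T (a ⊗ₜ[A] b) = a * b := rfl

@[simp] lemma QTaux_unopL_apply (a : Tᵐᵒᵖ) : unopL A T a = a.unop := rfl

@[simp] lemma QTaux_opL_apply (a : T) : opL A T a = MulOpposite.op a := rfl

@[simp] lemma QTaux_mulOT_tmul (a : Tᵐᵒᵖ) (b : T) :
    mulOT A T (a ⊗ₜ[A] b) = a.unop * b := rfl

@[simp] lemma QTaux_mulTO_tmul (a : T) (b : Tᵐᵒᵖ) :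
    mulTO A T (a ⊗ₜ[A] b) = a * b.unop := rfl

@[simp] lemma QTaux_tau13_tmul (a : T) (b : Tᵐᵒᵖ) (c : T) :
    tau13 A T (a ⊗ₜ[A] (b ⊗ₜ[A] c)) = c ⊗ₜ[A] (b ⊗ₜ[A] a) := by
  simp [tau13]

variable (μ : T →ₗ[A] T ⊗[A] (Tᵐᵒᵖ ⊗[A] T)) (θ : T →ₗ[A] T)

/-- contraction of the left-hand side of the `θ`-law against `mult5`. -/
lemma QTaux_keyA :
    mult5 A T ∘ₗ theta3 A T θ ∘ₗ
      (map LinearMap.id (TensorProduct.assoc A Tᵐᵒᵖ T (Tᵐᵒᵖ ⊗[A] T)).toLinearMap ∘ₗ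
       (TensorProduct.assoc A T (Tᵐᵒᵖ ⊗[A] T) (Tᵐᵒᵖ ⊗[A] T)).toLinearMap)
    = mulTT A T ∘ₗ map (mulTT A T ∘ₗ map LinearMap.id θ ∘ₗ m12 A T) (mulOT A T) := by
  ext a b c d e
  simp [mult5, theta3, m12, mul_assoc]

lemma QTaux_LHS (h : IsTorsor A T μ θ) (x : T) :
    mult5 A T (theta3 A T θ (mu1 A T μ (μ x))) = θ x := by
  have h1 : mult5 A T (theta3 A T θ (mu1 A T μ (μ x)))
      = (mulTT A T ∘ₗ map (mulTT A T ∘ₗ map LinearMap.id θ ∘ₗ m12 A T) (mulOT A T))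
          (map μ LinearMap.id (μ x)) := by
    rw [← QTaux_keyA]
    rfl
  rw [h1]
  have h2 : map (mulTT A T ∘ₗ map LinearMap.id θ ∘ₗ m12 A T) (mulOT A T) ∘ₗ
        map μ (LinearMap.id : Tᵐᵒᵖ ⊗[A] T →ₗ[A] Tᵐᵒᵖ ⊗[A] T)
      = map ((mulTT A T ∘ₗ map LinearMap.id θ ∘ₗ m12 A T) ∘ₗ μ) LinearMap.id ∘ₗ
        map LinearMap.id (mulOT A T) := by
    rw [← TensorProduct.map_comp, ← TensorProduct.map_comp]
    simp
  have h2' := congrArg (fun f => f (μ x)) h2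
  simp only [LinearMap.comp_apply] at h2'
  rw [LinearMap.comp_apply, h2', h.left_law x]
  simp only [map_tmul, LinearMap.comp_apply, LinearMap.id_coe, id_eq]
  rw [h.right_law x]
  simp

/-- contraction of the inner part of the right-hand side of the `θ`-law. -/
lemma QTaux_keyB :
    (mulOT A T ∘ₗ map LinearMap.id (mulTT A T ∘ₗ map LinearMap.id (mulOT A T))) ∘ₗ
      (map LinearMap.id (TensorProduct.assoc A T Tᵐᵒᵖ T).toLinearMap ∘ₗ
       (TensorProduct.assoc A Tᵐᵒᵖ (T ⊗[A] Tᵐᵒᵖ) T).toLinearMap)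
    = mulTT A T ∘ₗ map (mulOT A T ∘ₗ map LinearMap.id (mulTO A T)) LinearMap.id := by
  ext u v w e
  simp [mul_assoc]

lemma QTaux_keyC :
    (mulOT A T ∘ₗ map LinearMap.id (mulTO A T)) ∘ₗ oppify A T = collapseR A T := by
  ext a b c
  simp [oppify, collapseR]

lemma QTaux_collapseR_mu (h : IsTorsor A T μ θ) (x : T) :
    collapseR A T (μ x) = x := by
  have : collapseR A T (μ x) = mulTT A T (map LinearMap.id (mulOT A T) (μ x)) := rfl
  rw [this, h.left_law x]
  simp

lemma QTaux_r_eq (h : IsTorsor A T μ θ)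
    (hc : (∀ x y : T, x * y = y * x) ∨ (∀ x : T, tau13 A T (μ x) = μ x)) :
    (mulOT A T ∘ₗ map LinearMap.id (mulTO A T)) ∘ₗ muopO A T μ = unopL A T := by
  have hfac : (mulOT A T ∘ₗ map LinearMap.id (mulTO A T)) ∘ₗ muopO A T μ
      = (collapseR A T ∘ₗ (tau13 A T).toLinearMap) ∘ₗ μ ∘ₗ unopL A T := by
    rw [muopO, ← LinearMap.comp_assoc, ← LinearMap.comp_assoc, QTaux_keyC,
      LinearMap.comp_assoc]
  rw [hfac]
  rcases hc with hcm | hμ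
  · -- T commutative: collapseR ∘ tau13 = collapseR
    have ht : collapseR A T ∘ₗ (tau13 A T).toLinearMap = collapseR A T := by
      ext a b c
      simp [collapseR, mul_assoc]
      rw [hcm (MulOpposite.unop b) c, hcm (MulOpposite.unop b) a, ← mul_assoc, ← mul_assoc,
        hcm c a]
    rw [ht]
    ext t
    exact QTaux_collapseR_mu A T μ θ h _
  · -- μ commutative
    ext t
    simp only [LinearMap.comp_apply, LinearEquiv.coe_coe]
    rw [hμ]
    exact QTaux_collapseR_mu A T μ θ h _

lemma QTaux_RHS (h : IsTorsor A T μ θ)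
    (hc : (∀ x y : T, x * y = y * x) ∨ (∀ x : T, tau13 A T (μ x) = μ x)) (x : T) :
    mult5 A T (muMid A T μ (μ x)) = x := by
  have hM : mult5 A T ∘ₗ muMid A T μ = collapseR A T := by
    have h0 : mult5 A T ∘ₗ muMid A T μ
        = mulTT A T ∘ₗ map LinearMap.id
            ((mulOT A T ∘ₗ map LinearMap.id (mulTT A T ∘ₗ map LinearMap.id (mulOT A T))) ∘ₗ
              (map LinearMap.id (TensorProduct.assoc A T Tᵐᵒᵖ T).toLinearMap ∘ₗ
               (TensorProduct.assoc A Tᵐᵒᵖ (T ⊗[A] Tᵐᵒᵖ) T).toLinearMap) ∘ₗ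
              map (muopO A T μ) LinearMap.id) := by
      rw [mult5, muMid, LinearMap.comp_assoc, ← TensorProduct.map_comp]
      simp only [LinearMap.comp_assoc, LinearMap.id_comp]
    rw [h0, ← LinearMap.comp_assoc (map (muopO A T μ) LinearMap.id), QTaux_keyB,
      LinearMap.comp_assoc (map (muopO A T μ) LinearMap.id)
        (map (mulOT A T ∘ₗ map LinearMap.id (mulTO A T)) LinearMap.id) (mulTT A T),
      ← TensorProduct.map_comp, QTaux_r_eq A T μ θ h hc, LinearMap.id_comp]
    rfl
  calc mult5 A T (muMid A T μ (μ x)) = (mult5 A T ∘ₗ muMid A T μ) (μ x) := rfl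
    _ = collapseR A T (μ x) := by rw [hM]
    _ = x := QTaux_collapseR_mu A T μ θ h x

end ThetaAux

open TensorProduct QT in
/-- if the torsor `(T, m_T, 1_T, μ_T, θ_T)` is commutative as an algebra,
or is endowed with a commutative law (`μ_T = μ_Tᵒᵖ = τ₍₁₃₎ ∘ μ_T`), then `θ_T = Id`. -/
theorem theta_eq_id (k : Type*) [Field k]
    (A : Type*) [CommRing A] [IsDomain A] [Algebra k A]
    (T : Type*) [Ring T] [Algebra A T]
    (μ : T →ₗ[A] T ⊗[A] (Tᵐᵒᵖ ⊗[A] T)) (θ : T →ₗ[A] T)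
    (h : IsTorsor A T μ θ)
    (hc : (∀ x y : T, x * y = y * x) ∨ (∀ x : T, tau13 A T (μ x) = μ x)) :
    θ = LinearMap.id := by
  ext x
  have h1 := QTaux_LHS A T μ θ h x
  have h2 := QTaux_RHS A T μ θ h hc x
  have h3 := h.theta_law x
  simp only [LinearMap.id_coe, id_eq]
  rw [← h1, h3, h2]
end

section
/- Let K = k[T]/(P) be a finite Galois extension of a field k with primitive element t := cl(T) and Galois group G := Gal(K/k). Identify K ⊗_k K with K[T]/(P) (t ⊗ 1 ↦ cl(T), 1 ⊗ t ↦ t ∈ K), and for σ ∈ G set P_σ := Π_{τ ≠ σ} (t₁ − τ(t₂))/(σ(t₂) − τ(t₂)) ∈ K ⊗_k K, where t₁ := t ⊗ 1 and t₂ := 1 ⊗ t. Then the algebra morphism μ_K : K → K ⊗_k K ⊗_k K, x ↦ Σ_{σ ∈ G} P_σ ⊗ σ(x), makes (K, m_K, 1_K, μ_K, Id_K) a k-torsor; moreover every element of G is an automorphism of this torsor (i.e., commutes with μ_K in the appropriate sense). -/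
/- Common setup: quantum torsors following Grunspan, "Quantum torsors".
   `T` is an `A`-algebra; the torsor law is an algebra morphism
   `μ : T → T ⊗[A] Tᵐᵒᵖ ⊗[A] T` and `θ : T → T` is an algebra automorphism. -/

open scoped TensorProduct
open TensorProduct

namespace QT

section FunHopf

variable (k : Type*) [Field k] (G : Type*) [Fintype G]

/-- comultiplication of the Hopf algebra of `k`-valued functions on a finite group `G`
with multiplication `m` : `Δ(f) = ∑_{g,h} f(m g h) • (1_g ⊗ 1_h)`. -/
noncomputable def funDelta (m : G → G → G) : (G → k) →ₗ[k] (G → k) ⊗[k] (G → k) :=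
  letI := Classical.decEq G
  ∑ g : G, ∑ h : G,
    LinearMap.smulRight (LinearMap.proj (m g h))
      ((Pi.single g 1 : G → k) ⊗ₜ[k] (Pi.single h 1 : G → k))

/-- `unit ∘ counit` of the function Hopf algebra: `f ↦ f(e) • 1`. -/
noncomputable def funCounitE (e : G) : (G → k) →ₗ[k] (G → k) :=
  LinearMap.smulRight (LinearMap.proj e) (1 : G → k)

/-- antipode of the function Hopf algebra: `f ↦ f ∘ i`. -/
noncomputable def funAntipode (i : G → G) : (G → k) →ₗ[k] (G → k) :=
  LinearMap.funLeft k k i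

end FunHopf

section Galois

variable (k K : Type*) [Field k] [Field K] [Algebra k K] [FiniteDimensional k K]

/-- the idempotent `P_σ = ∏_{τ ≠ σ} (t₁ − τ(t₂)) / (σ(t₂) − τ(t₂)) ∈ K ⊗ K`. -/
noncomputable def Psigma (t : K) (σ : K ≃ₐ[k] K) : K ⊗[k] K :=
  letI := Classical.decEq (K ≃ₐ[k] K)
  ∏ τ ∈ Finset.univ.erase σ,
    ((t ⊗ₜ[k] (1 : K)) - ((1 : K) ⊗ₜ[k] (τ t))) * ((1 : K) ⊗ₜ[k] ((σ t - τ t)⁻¹))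

/-- regrouping `(K ⊗ K) ⊗ K ≅ K ⊗ Kᵐᵒᵖ ⊗ K`. -/
noncomputable def galoisConv : (K ⊗[k] K) ⊗[k] K ≃ₗ[k] K ⊗[k] (Kᵐᵒᵖ ⊗[k] K) :=
  TensorProduct.assoc k K K K ≪≫ₗ
  TensorProduct.congr (LinearEquiv.refl k K)
    (TensorProduct.congr (MulOpposite.opLinearEquiv k : K ≃ₗ[k] Kᵐᵒᵖ) (LinearEquiv.refl k K))

/-- the torsor law `μ_K(x) = ∑_σ P_σ ⊗ σ(x)` of a Galois extension `K/k`. -/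
noncomputable def muGalois (t : K) : K →ₗ[k] K ⊗[k] (Kᵐᵒᵖ ⊗[k] K) :=
  ∑ σ : K ≃ₐ[k] K,
    (galoisConv k K).toLinearMap ∘ₗ
      TensorProduct.mk k (K ⊗[k] K) K (Psigma k K t σ) ∘ₗ σ.toLinearMap

end Galois

end QT

set_option linter.unusedSectionVars false
set_option synthInstance.maxHeartbeats 200000
set_option maxHeartbeats 800000
namespace GalP

open QT TensorProduct MulOpposite

variable {k K : Type*} [Field k] [Field K] [Algebra k K] [FiniteDimensional k K]

/-- evaluate two linear maps and multiply the results. -/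
noncomputable def EE {V W : Type*} [AddCommMonoid V] [Module k V] [AddCommMonoid W] [Module k W]
    (f : V →ₗ[k] K) (g : W →ₗ[k] K) : V ⊗[k] W →ₗ[k] K :=
  LinearMap.mul' k K ∘ₗ map f g

@[simp] lemma EE_tmul {V W : Type*} [AddCommMonoid V] [Module k V] [AddCommMonoid W] [Module k W]
    (f : V →ₗ[k] K) (g : W →ₗ[k] K) (v : V) (w : W) :
    EE f g (v ⊗ₜ[k] w) = f v * g w := by
  simp [EE]

section ext

variable {V W U M : Type*} [AddCommMonoid V] [Module k V] [AddCommMonoid W] [Module k W]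
  [AddCommMonoid U] [Module k U] [AddCommMonoid M] [Module k M]

lemma ext2 {f g : V ⊗[k] W →ₗ[k] M}
    (h : ∀ v w, f (v ⊗ₜ[k] w) = g (v ⊗ₜ[k] w)) : f = g := TensorProduct.ext' h

lemma extL {f g : (V ⊗[k] W) ⊗[k] U →ₗ[k] M}
    (h : ∀ v w u, f ((v ⊗ₜ[k] w) ⊗ₜ[k] u) = g ((v ⊗ₜ[k] w) ⊗ₜ[k] u)) : f = g := by
  apply TensorProduct.ext'
  intro vw u
  induction vw using TensorProduct.induction_on with
  | zero => simp
  | tmul v w => exact h v w u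
  | add a b ha hb => rw [add_tmul, map_add, map_add, ha, hb]

lemma extR {f g : V ⊗[k] (W ⊗[k] U) →ₗ[k] M}
    (h : ∀ v w u, f (v ⊗ₜ[k] (w ⊗ₜ[k] u)) = g (v ⊗ₜ[k] (w ⊗ₜ[k] u))) : f = g := by
  apply TensorProduct.ext'
  intro v wu
  induction wu using TensorProduct.induction_on with
  | zero => simp
  | tmul w u => exact h v w u
  | add a b ha hb => rw [tmul_add, map_add, map_add, ha, hb]

lemma EE_comp_map {V' W' : Type*} [AddCommMonoid V'] [Module k V'] [AddCommMonoid W'] [Module k W']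
    (f : V' →ₗ[k] K) (g : W' →ₗ[k] K) (p : V →ₗ[k] V') (q : W →ₗ[k] W') :
    EE f g ∘ₗ map p q = EE (f ∘ₗ p) (g ∘ₗ q) :=
  ext2 fun v w => by simp

lemma EE_assoc (f : V →ₗ[k] K) (g : W →ₗ[k] K) (h : U →ₗ[k] K) :
    EE f (EE g h) ∘ₗ (TensorProduct.assoc k V W U).toLinearMap = EE (EE f g) h :=
  extL fun v w u => by simp [mul_assoc]

lemma EE_assoc_symm (f : V →ₗ[k] K) (g : W →ₗ[k] K) (h : U →ₗ[k] K) :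
    EE (EE f g) h ∘ₗ (TensorProduct.assoc k V W U).symm.toLinearMap = EE f (EE g h) :=
  extR fun v w u => by simp [mul_assoc]

lemma comp_EE (π : K ≃ₐ[k] K) (f : V →ₗ[k] K) (g : W →ₗ[k] K) :
    π.toLinearMap ∘ₗ EE f g = EE (π.toLinearMap ∘ₗ f) (π.toLinearMap ∘ₗ g) :=
  ext2 fun v w => by simp

end ext

@[simp] lemma unopL_apply (y : Kᵐᵒᵖ) : unopL k K y = unop y := rfl
@[simp] lemma opL_apply (y : K) : opL k K y = op y := rfl

lemma mulL (a b : K ≃ₐ[k] K) :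
    (a * b).toLinearMap = a.toLinearMap ∘ₗ b.toLinearMap := by
  ext x; simp [AlgEquiv.mul_apply]

/-- eval on `Kᵐᵒᵖ ⊗ K`. -/
noncomputable def F2 (π ψ : K ≃ₐ[k] K) : Kᵐᵒᵖ ⊗[k] K →ₗ[k] K :=
  EE (π.toLinearMap ∘ₗ unopL k K) ψ.toLinearMap

/-- eval on `K ⊗ Kᵐᵒᵖ ⊗ K`. -/
noncomputable def E3 (ρ π ψ : K ≃ₐ[k] K) : K ⊗[k] (Kᵐᵒᵖ ⊗[k] K) →ₗ[k] K :=
  EE ρ.toLinearMap (F2 π ψ)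

/-- eval on `Kᵐᵒᵖ ⊗ (K ⊗ Kᵐᵒᵖ ⊗ K)`. -/
noncomputable def F4 (π a b c : K ≃ₐ[k] K) :
    Kᵐᵒᵖ ⊗[k] (K ⊗[k] (Kᵐᵒᵖ ⊗[k] K)) →ₗ[k] K :=
  EE (π.toLinearMap ∘ₗ unopL k K) (E3 a b c)

/-- eval on the 5-fold tensor product. -/
noncomputable def E5 (ρ π a b c : K ≃ₐ[k] K) :
    K ⊗[k] (Kᵐᵒᵖ ⊗[k] (K ⊗[k] (Kᵐᵒᵖ ⊗[k] K))) →ₗ[k] K :=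
  EE ρ.toLinearMap (F4 π a b c)

/-- eval on `K ⊗ K`. -/
noncomputable def E2 (ρ π : K ≃ₐ[k] K) : K ⊗[k] K →ₗ[k] K :=
  EE ρ.toLinearMap π.toLinearMap

/-- `E2` as an algebra morphism. -/
noncomputable def A2 (ρ π : K ≃ₐ[k] K) : K ⊗[k] K →ₐ[k] K :=
  Algebra.TensorProduct.productMap ρ.toAlgHom π.toAlgHom

lemma A2_eq (ρ π : K ≃ₐ[k] K) (z : K ⊗[k] K) : A2 ρ π z = E2 ρ π z :=
  LinearMap.congr_fun (ext2 (f := (A2 ρ π).toLinearMap) (g := E2 ρ π)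
    fun x y => by simp [A2, E2]) z

/-- `unop` as an algebra morphism. -/
noncomputable def uA : Kᵐᵒᵖ →ₐ[k] K := ((AlgEquiv.toOpposite k K).symm : Kᵐᵒᵖ ≃ₐ[k] K).toAlgHom

@[simp] lemma uA_apply (y : Kᵐᵒᵖ) : uA (k := k) y = unop y :=
  (AlgEquiv.symm_apply_eq _).mpr rfl

/-- `E3` as an algebra morphism. -/
noncomputable def A3 (ρ π ψ : K ≃ₐ[k] K) : K ⊗[k] (Kᵐᵒᵖ ⊗[k] K) →ₐ[k] K :=
  Algebra.TensorProduct.productMap ρ.toAlgHom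
    (Algebra.TensorProduct.productMap (π.toAlgHom.comp uA) ψ.toAlgHom)

lemma A3_eq (ρ π ψ : K ≃ₐ[k] K) (z : K ⊗[k] (Kᵐᵒᵖ ⊗[k] K)) :
    A3 ρ π ψ z = E3 ρ π ψ z :=
  LinearMap.congr_fun (extR (f := (A3 ρ π ψ).toLinearMap) (g := E3 ρ π ψ)
    fun x y z => by simp [A3, E3, F2]) z

section galois

variable [IsGalois k K]

open scoped Classical

noncomputable local instance acg2o : AddCommGroup (Kᵐᵒᵖ ⊗[k] K) := inferInstance
noncomputable local instance acg2 : AddCommGroup (K ⊗[k] K) := inferInstance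
noncomputable local instance acg3 : AddCommGroup (K ⊗[k] (Kᵐᵒᵖ ⊗[k] K)) := inferInstance
noncomputable local instance acg4 : AddCommGroup (K ⊗[k] (K ⊗[k] (Kᵐᵒᵖ ⊗[k] K))) := inferInstance
noncomputable local instance acg4o : AddCommGroup (Kᵐᵒᵖ ⊗[k] (K ⊗[k] (Kᵐᵒᵖ ⊗[k] K))) := inferInstance
noncomputable local instance acg5 : AddCommGroup (K ⊗[k] (Kᵐᵒᵖ ⊗[k] (K ⊗[k] (Kᵐᵒᵖ ⊗[k] K)))) := inferInstance


lemma aut_inj {t : K} (ht : IntermediateField.adjoin k {t} = ⊤)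
    {σ τ : K ≃ₐ[k] K} (h : σ t = τ t) : σ = τ := by
  apply AlgEquiv.ext
  intro x
  have hx : x ∈ IntermediateField.adjoin k {t} := by rw [ht]; trivial
  induction hx using IntermediateField.adjoin_induction with
  | mem y hy => rwa [Set.mem_singleton_iff.mp hy]
  | algebraMap y => simp
  | add y z _ _ hy hz => rw [map_add, map_add, hy, hz]
  | inv y _ hy => rw [map_inv₀, map_inv₀, hy]
  | mul y z _ _ hy hz => rw [map_mul, map_mul, hy, hz]

lemma A2_Psigma {t : K} (ht : IntermediateField.adjoin k {t} = ⊤)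
    (ρ π σ : K ≃ₐ[k] K) :
    A2 ρ π (Psigma k K t σ) = if ρ = π * σ then 1 else 0 := by
  classical
  have hfac : ∀ τ : K ≃ₐ[k] K,
      A2 ρ π (((t ⊗ₜ[k] (1 : K)) - ((1 : K) ⊗ₜ[k] (τ t))) *
        ((1 : K) ⊗ₜ[k] ((σ t - τ t)⁻¹)))
      = (ρ t - π (τ t)) * (π (σ t) - π (τ t))⁻¹ := by
    intro τ
    rw [map_mul, map_sub]
    simp [A2, map_inv₀, map_sub]
  rw [Psigma, map_prod]
  rw [Finset.prod_congr rfl fun τ _ => hfac τ]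
  by_cases hρ : ρ = π * σ
  · rw [if_pos hρ]
    apply Finset.prod_eq_one
    intro τ hτ
    have hτσ : τ ≠ σ := Finset.ne_of_mem_erase hτ
    have hne : π (σ t) - π (τ t) ≠ 0 := by
      refine sub_ne_zero.mpr (fun hh => hτσ ?_)
      exact (aut_inj ht (π.injective hh)).symm
    rw [hρ, AlgEquiv.mul_apply]
    exact mul_inv_cancel₀ hne
  · rw [if_neg hρ]
    apply Finset.prod_eq_zero (i := π⁻¹ * ρ)
    · refine Finset.mem_erase.mpr ⟨fun h => hρ ?_, Finset.mem_univ _⟩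
      rw [← h, mul_inv_cancel_left]
    · have : π ((π⁻¹ * ρ) t) = ρ t := by
        rw [← AlgEquiv.mul_apply, mul_inv_cancel_left]
      rw [this, sub_self, zero_mul]

lemma inj2 {t : K} (ht : IntermediateField.adjoin k {t} = ⊤)
    (z : K ⊗[k] K) (hz : ∀ ρ π : K ≃ₐ[k] K, E2 ρ π z = 0) : z = 0 := by
  classical
  set Φ : K ⊗[k] K →ₗ[K] ((K ≃ₐ[k] K) → K) :=
    LinearMap.pi (fun π : K ≃ₐ[k] K => LinearMap.liftBaseChange K π.toLinearMap) with hΦ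
  have hlift : ∀ (π : K ≃ₐ[k] K) (w : K ⊗[k] K),
      LinearMap.liftBaseChange K π.toLinearMap w = A2 1 π w := by
    intro π w
    induction w using TensorProduct.induction_on with
    | zero => simp
    | tmul x y => simp [A2, smul_eq_mul]
    | add a b ha hb => rw [map_add, map_add, ha, hb]
  have hsurj : Function.Surjective Φ := by
    intro f
    refine ⟨∑ σ : K ≃ₐ[k] K, f σ⁻¹ • Psigma k K t σ, ?_⟩
    funext π
    have h1 : Φ (∑ σ : K ≃ₐ[k] K, f σ⁻¹ • Psigma k K t σ) π
        = ∑ σ : K ≃ₐ[k] K, f σ⁻¹ * A2 1 π (Psigma k K t σ) := by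
      rw [hΦ, map_sum]
      simp only [LinearMap.pi_apply, Finset.sum_apply, LinearMap.sum_apply]
      refine Finset.sum_congr rfl fun σ _ => ?_
      rw [map_smul, smul_eq_mul, hlift]
    rw [h1]
    rw [Finset.sum_eq_single π⁻¹]
    · rw [A2_Psigma ht]
      simp
    · intro σ _ hσ
      rw [A2_Psigma ht, if_neg, mul_zero]
      intro h
      exact hσ (eq_inv_of_mul_eq_one_right h.symm)
    · intro h; exact absurd (Finset.mem_univ _) h
  have hfr : Module.finrank K (K ⊗[k] K) = Module.finrank K ((K ≃ₐ[k] K) → K) := by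
    rw [Module.finrank_baseChange, Module.finrank_fintype_fun_eq_card,
      ← Nat.card_eq_fintype_card, IsGalois.card_aut_eq_finrank]
  have hinj : Function.Injective Φ :=
    (LinearMap.injective_iff_surjective_of_finrank_eq_finrank hfr).mpr hsurj
  apply hinj
  rw [map_zero]
  funext π
  have : Φ z π = A2 1 π z := by rw [hΦ]; simp only [LinearMap.pi_apply]; exact hlift π z
  rw [this, A2_eq, hz]
  rfl

lemma step {V : Type*} [AddCommGroup V] [Module k V] {ι : Type*} [Fintype ι] [DecidableEq ι]
    {t : K} (ht : IntermediateField.adjoin k {t} = ⊤) (f : ι → (V →ₗ[k] K))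
    (hf : ∀ v : V, (∀ i, f i v = 0) → v = 0)
    (hcl : ∀ (π : K ≃ₐ[k] K) (i : ι), ∃ j, π.toLinearMap ∘ₗ f i = f j)
    (z : K ⊗[k] V) (hz : ∀ (ρ : K ≃ₐ[k] K) (i : ι), EE ρ.toLinearMap (f i) z = 0) :
    z = 0 := by
  have w0 : ∀ i, LinearMap.lTensor K (f i) z = 0 := by
    intro i
    apply inj2 ht
    intro ρ π
    obtain ⟨j, hj⟩ := hcl π i
    have hcomp : E2 ρ π ∘ₗ LinearMap.lTensor K (f i) = EE ρ.toLinearMap (f j) := by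
      rw [← hj]
      exact ext2 fun x v => by simp [E2]
    calc E2 ρ π (LinearMap.lTensor K (f i) z)
        = (E2 ρ π ∘ₗ LinearMap.lTensor K (f i)) z := rfl
      _ = EE ρ.toLinearMap (f j) z := by rw [hcomp]
      _ = 0 := hz ρ j
  set F : V →ₗ[k] (ι → K) := LinearMap.pi f with hF
  have hFinj : Function.Injective F := by
    rw [← LinearMap.ker_eq_bot]
    refine (Submodule.eq_bot_iff _).mpr fun v hv => ?_
    refine hf v fun i => ?_
    have := LinearMap.mem_ker.mp hv
    rw [hF] at this
    simpa using congr_fun this i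
  have hdecomp : F = ∑ i : ι, (LinearMap.single k (fun _ : ι => K) i) ∘ₗ f i := by
    apply LinearMap.ext
    intro v
    rw [LinearMap.sum_apply]
    simp only [LinearMap.comp_apply, LinearMap.single_apply, hF, LinearMap.pi_apply]
    exact (Finset.univ_sum_single (fun i => f i v)).symm
  have hzero : LinearMap.lTensor K F z = 0 := by
    have h1 : LinearMap.lTensor K F
        = ∑ i : ι, LinearMap.lTensor K ((LinearMap.single k (fun _ : ι => K) i) ∘ₗ f i) := by
      rw [hdecomp, ← LinearMap.coe_lTensorHom]
      exact map_sum _ _ _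
    rw [h1, LinearMap.sum_apply]
    refine Finset.sum_eq_zero fun i _ => ?_
    rw [LinearMap.lTensor_comp, LinearMap.comp_apply, w0 i, map_zero]
  have hinj : Function.Injective (LinearMap.lTensor K F) :=
    Module.Flat.lTensor_preserves_injective_linearMap F hFinj
  apply hinj
  rw [hzero, map_zero]

lemma comp_F2 (π a b : K ≃ₐ[k] K) :
    π.toLinearMap ∘ₗ F2 a b = F2 (π * a) (π * b) :=
  ext2 fun y z => by simp [F2, map_mul, AlgEquiv.mul_apply]

lemma comp_E3 (π ρ a b : K ≃ₐ[k] K) :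
    π.toLinearMap ∘ₗ E3 ρ a b = E3 (π * ρ) (π * a) (π * b) :=
  extR fun x y z => by simp [E3, F2, map_mul, AlgEquiv.mul_apply, mul_assoc]

lemma comp_F4 (π p a b c : K ≃ₐ[k] K) :
    π.toLinearMap ∘ₗ F4 p a b c = F4 (π * p) (π * a) (π * b) (π * c) := by
  rw [F4, comp_EE, comp_E3, F4, mulL, LinearMap.comp_assoc]

lemma inj3 {t : K} (ht : IntermediateField.adjoin k {t} = ⊤)
    (z : K ⊗[k] (Kᵐᵒᵖ ⊗[k] K))
    (hz : ∀ ρ π ψ : K ≃ₐ[k] K, E3 ρ π ψ z = 0) : z = 0 := by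
  refine step ht (fun p : (K ≃ₐ[k] K) × (K ≃ₐ[k] K) => F2 p.1 p.2) ?_
    (fun π p => ⟨(π * p.1, π * p.2), comp_F2 π p.1 p.2⟩) z (fun ρ p => hz ρ p.1 p.2)
  intro v hv
  set e : Kᵐᵒᵖ ⊗[k] K ≃ₗ[k] K ⊗[k] K :=
    TensorProduct.congr ((MulOpposite.opLinearEquiv k : K ≃ₗ[k] Kᵐᵒᵖ)).symm
      (LinearEquiv.refl k K) with he
  have h0 : e v = 0 := by
    apply inj2 ht
    intro ρ π
    have hc : E2 ρ π ∘ₗ e.toLinearMap = F2 ρ π := ext2 fun y z => by simp [E2, F2, he]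
    calc E2 ρ π (e v) = (E2 ρ π ∘ₗ e.toLinearMap) v := rfl
      _ = 0 := by rw [hc]; exact hv (ρ, π)
  simpa using congrArg e.symm h0

lemma inj4 {t : K} (ht : IntermediateField.adjoin k {t} = ⊤)
    (z : K ⊗[k] (K ⊗[k] (Kᵐᵒᵖ ⊗[k] K)))
    (hz : ∀ ρ a b c : K ≃ₐ[k] K, EE ρ.toLinearMap (E3 a b c) z = 0) : z = 0 := by
  refine step ht
    (fun q : (K ≃ₐ[k] K) × (K ≃ₐ[k] K) × (K ≃ₐ[k] K) => E3 q.1 q.2.1 q.2.2)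
    (fun v hv => inj3 ht v fun a b c => hv (a, b, c))
    (fun π q => ⟨(π * q.1, π * q.2.1, π * q.2.2), comp_E3 π q.1 q.2.1 q.2.2⟩) z
    (fun ρ q => hz ρ q.1 q.2.1 q.2.2)

lemma inj5 {t : K} (ht : IntermediateField.adjoin k {t} = ⊤)
    (z : K ⊗[k] (Kᵐᵒᵖ ⊗[k] (K ⊗[k] (Kᵐᵒᵖ ⊗[k] K))))
    (hz : ∀ ρ π a b c : K ≃ₐ[k] K, E5 ρ π a b c z = 0) : z = 0 := by
  refine step ht
    (fun q : (K ≃ₐ[k] K) × (K ≃ₐ[k] K) × (K ≃ₐ[k] K) × (K ≃ₐ[k] K) =>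
      F4 q.1 q.2.1 q.2.2.1 q.2.2.2) ?_
    (fun π q => ⟨(π * q.1, π * q.2.1, π * q.2.2.1, π * q.2.2.2),
      comp_F4 π q.1 q.2.1 q.2.2.1 q.2.2.2⟩) z
    (fun ρ q => hz ρ q.1 q.2.1 q.2.2.1 q.2.2.2)
  intro v hv
  set e : Kᵐᵒᵖ ⊗[k] (K ⊗[k] (Kᵐᵒᵖ ⊗[k] K)) ≃ₗ[k] K ⊗[k] (K ⊗[k] (Kᵐᵒᵖ ⊗[k] K)) :=
    TensorProduct.congr ((MulOpposite.opLinearEquiv k : K ≃ₗ[k] Kᵐᵒᵖ)).symm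
      (LinearEquiv.refl k _) with he
  have h0 : e v = 0 := by
    apply inj4 ht
    intro ρ a b c
    have hc : EE ρ.toLinearMap (E3 a b c) ∘ₗ e.toLinearMap = F4 ρ a b c :=
      ext2 fun y w => by simp [F4, he]
    calc EE ρ.toLinearMap (E3 a b c) (e v)
        = (EE ρ.toLinearMap (E3 a b c) ∘ₗ e.toLinearMap) v := rfl
      _ = 0 := by rw [hc]; exact hv (ρ, a, b, c)
  simpa using congrArg e.symm h0

lemma eq_of_E2 {t : K} (ht : IntermediateField.adjoin k {t} = ⊤)
    {u v : K ⊗[k] K} (h : ∀ ρ π : K ≃ₐ[k] K, E2 ρ π u = E2 ρ π v) : u = v :=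
  sub_eq_zero.mp (inj2 ht _ fun ρ π => by rw [map_sub, h, sub_self])

lemma eq_of_E3 {t : K} (ht : IntermediateField.adjoin k {t} = ⊤)
    {u v : K ⊗[k] (Kᵐᵒᵖ ⊗[k] K)}
    (h : ∀ ρ π ψ : K ≃ₐ[k] K, E3 ρ π ψ u = E3 ρ π ψ v) : u = v :=
  sub_eq_zero.mp (inj3 ht _ fun ρ π ψ => by rw [map_sub, h, sub_self])

lemma eq_of_E5 {t : K} (ht : IntermediateField.adjoin k {t} = ⊤)
    {u v : K ⊗[k] (Kᵐᵒᵖ ⊗[k] (K ⊗[k] (Kᵐᵒᵖ ⊗[k] K)))}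
    (h : ∀ ρ π a b c : K ≃ₐ[k] K, E5 ρ π a b c u = E5 ρ π a b c v) : u = v :=
  sub_eq_zero.mp (inj5 ht _ fun ρ π a b c => by rw [map_sub, h, sub_self])

lemma gc_E3 (ρ π ψ : K ≃ₐ[k] K) :
    E3 ρ π ψ ∘ₗ (galoisConv k K).toLinearMap = EE (E2 ρ π) ψ.toLinearMap :=
  extL fun a b c => by simp [E3, F2, E2, galoisConv, mul_assoc]

lemma mu_apply (t : K) (x : K) :
    muGalois k K t x
      = ∑ σ : K ≃ₐ[k] K, galoisConv k K (Psigma k K t σ ⊗ₜ[k] σ x) := by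
  rw [muGalois, LinearMap.sum_apply]
  rfl

lemma LC {t : K} (ht : IntermediateField.adjoin k {t} = ⊤)
    (ρ π ψ : K ≃ₐ[k] K) (x : K) :
    E3 ρ π ψ (muGalois k K t x) = (ψ * π⁻¹ * ρ) x := by
  rw [mu_apply, map_sum]
  have key : ∀ σ : K ≃ₐ[k] K,
      E3 ρ π ψ (galoisConv k K (Psigma k K t σ ⊗ₜ[k] σ x))
        = (if ρ = π * σ then 1 else 0) * ψ (σ x) := by
    intro σ
    have h1 := LinearMap.congr_fun (gc_E3 ρ π ψ) (Psigma k K t σ ⊗ₜ[k] σ x)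
    simp only [LinearMap.comp_apply, LinearEquiv.coe_coe, EE_tmul] at h1
    rw [h1, ← A2_eq, A2_Psigma ht]
    rfl
  rw [Finset.sum_congr rfl fun σ _ => key σ]
  rw [Finset.sum_eq_single (π⁻¹ * ρ)]
  · rw [if_pos (by group), one_mul]
    simp [AlgEquiv.mul_apply]
  · intro σ _ hσ
    rw [if_neg (fun h => hσ (by rw [h]; group)), zero_mul]
  · intro h; exact absurd (Finset.mem_univ _) h

lemma LCmap {t : K} (ht : IntermediateField.adjoin k {t} = ⊤) (ρ π ψ : K ≃ₐ[k] K) :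
    EE ρ.toLinearMap (EE (π.toLinearMap ∘ₗ unopL k K) ψ.toLinearMap) ∘ₗ muGalois k K t
      = (ψ * π⁻¹ * ρ).toLinearMap :=
  LinearMap.ext fun x => LC ht ρ π ψ x

lemma sum_Psigma {t : K} (ht : IntermediateField.adjoin k {t} = ⊤) :
    (∑ σ : K ≃ₐ[k] K, Psigma k K t σ) = 1 := by
  refine sub_eq_zero.mp (inj2 ht _ fun ρ π => ?_)
  rw [map_sub]
  have h1 : E2 ρ π (∑ σ : K ≃ₐ[k] K, Psigma k K t σ)
      = ∑ σ : K ≃ₐ[k] K, if ρ = π * σ then (1 : K) else 0 := by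
    rw [map_sum]
    exact Finset.sum_congr rfl fun σ _ => by rw [← A2_eq, A2_Psigma ht]
  have h2 : E2 ρ π (1 : K ⊗[k] K) = 1 := by rw [← A2_eq]; exact map_one _
  rw [h1, h2, Finset.sum_eq_single (π⁻¹ * ρ)]
  · rw [if_pos (by group), sub_self]
  · intro σ _ hσ
    exact if_neg fun h => hσ (by rw [h]; group)
  · intro h; exact absurd (Finset.mem_univ _) h

lemma E5_mu3 {t : K} (ht : IntermediateField.adjoin k {t} = ⊤) (ρ π a b c : K ≃ₐ[k] K) :
    E5 ρ π a b c ∘ₗ QT.mu3 k K (muGalois k K t) = E3 ρ π (c * b⁻¹ * a) := by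
  simp only [QT.mu3, E5, F4, E3, F2]
  rw [EE_comp_map, LinearMap.comp_id, EE_comp_map, LinearMap.comp_id, LCmap ht a b c]

lemma E5_mu1 {t : K} (ht : IntermediateField.adjoin k {t} = ⊤) (ρ π a b c : K ≃ₐ[k] K) :
    E5 ρ π a b c ∘ₗ QT.mu1 k K (muGalois k K t) = E3 (a * π⁻¹ * ρ) b c := by
  simp only [QT.mu1, E5, F4, E3, F2]
  rw [← LinearMap.comp_assoc, ← LinearMap.comp_assoc]
  rw [EE_comp_map, LinearMap.comp_id, EE_assoc, EE_assoc, EE_comp_map, LinearMap.comp_id,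
    LCmap ht ρ π a]

lemma EE_oppify (π a b : K ≃ₐ[k] K) :
    EE (π.toLinearMap ∘ₗ unopL k K) (EE a.toLinearMap (b.toLinearMap ∘ₗ unopL k K)) ∘ₗ
        QT.oppify k K
      = EE π.toLinearMap (EE (a.toLinearMap ∘ₗ unopL k K) b.toLinearMap) :=
  extR fun x y z => by simp [QT.oppify]

lemma E3_tau13 (ρ π ψ : K ≃ₐ[k] K) :
    EE ρ.toLinearMap (EE (π.toLinearMap ∘ₗ unopL k K) ψ.toLinearMap) ∘ₗ
        (QT.tau13 k K).toLinearMap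
      = EE ψ.toLinearMap (EE (π.toLinearMap ∘ₗ unopL k K) ρ.toLinearMap) :=
  extR fun x y z => by
    simp [QT.tau13]
    ring

lemma EE_muopO {t : K} (ht : IntermediateField.adjoin k {t} = ⊤) (π a b : K ≃ₐ[k] K) :
    EE (π.toLinearMap ∘ₗ unopL k K) (EE a.toLinearMap (b.toLinearMap ∘ₗ unopL k K)) ∘ₗ
        QT.muopO k K (muGalois k K t)
      = (π * a⁻¹ * b).toLinearMap ∘ₗ unopL k K := by
  rw [QT.muopO, ← LinearMap.comp_assoc, ← LinearMap.comp_assoc, ← LinearMap.comp_assoc]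
  rw [EE_oppify, E3_tau13, LCmap ht b a π]

lemma E5_muMid {t : K} (ht : IntermediateField.adjoin k {t} = ⊤) (ρ π a b c : K ≃ₐ[k] K) :
    E5 ρ π a b c ∘ₗ QT.muMid k K (muGalois k K t) = E3 ρ (π * a⁻¹ * b) c := by
  simp only [QT.muMid, E5, F4, E3, F2]
  rw [EE_comp_map, LinearMap.comp_id]
  rw [← LinearMap.comp_assoc, ← LinearMap.comp_assoc]
  rw [EE_comp_map, LinearMap.comp_id, EE_assoc, EE_assoc, EE_comp_map, LinearMap.comp_id,
    EE_muopO ht π a b]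

lemma theta3_id : QT.theta3 k K LinearMap.id = LinearMap.id := by
  simp [QT.theta3]

lemma thetaOp_id : QT.thetaOp k K LinearMap.id = LinearMap.id := by
  rw [QT.thetaOp]
  exact LinearMap.ext fun y => by simp

lemma mu_one {t : K} (ht : IntermediateField.adjoin k {t} = ⊤) :
    muGalois k K t 1 = 1 := by
  rw [mu_apply]
  have h1 : ∀ σ : K ≃ₐ[k] K,
      galoisConv k K (Psigma k K t σ ⊗ₜ[k] σ 1)
        = galoisConv k K (Psigma k K t σ ⊗ₜ[k] 1) := by
    intro σ; rw [map_one]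
  rw [Finset.sum_congr rfl fun σ _ => h1 σ, ← map_sum, ← sum_tmul, sum_Psigma ht]
  rw [Algebra.TensorProduct.one_def]
  simp [galoisConv, Algebra.TensorProduct.one_def]

lemma mu_mul {t : K} (ht : IntermediateField.adjoin k {t} = ⊤) (x y : K) :
    muGalois k K t (x * y) = muGalois k K t x * muGalois k K t y := by
  refine eq_of_E3 ht fun ρ π ψ => ?_
  have hR : E3 ρ π ψ (muGalois k K t x * muGalois k K t y)
      = (ψ * π⁻¹ * ρ) x * (ψ * π⁻¹ * ρ) y := by
    rw [← A3_eq, map_mul, A3_eq, A3_eq, LC ht, LC ht]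
  rw [hR, LC ht, map_mul]

lemma Hll (ρ π : K ≃ₐ[k] K) :
    E2 ρ π ∘ₗ map LinearMap.id (QT.mulOT k K) = E3 ρ π π :=
  extR fun a y c => by simp [E2, E3, F2, QT.mulOT, QT.mulTT, map_mul, mul_assoc]

lemma Hrl (ρ π : K ≃ₐ[k] K) :
    E2 ρ π ∘ₗ QT.m12 k K = E3 ρ ρ π :=
  extR fun a y c => by simp [E2, E3, F2, QT.m12, QT.mulTO, QT.mulTT, map_mul, mul_assoc]

lemma Hequiv (σ ρ π ψ : K ≃ₐ[k] K) :
    E3 ρ π ψ ∘ₗ map σ.toLinearMap (map (QT.thetaOp k K σ.toLinearMap) σ.toLinearMap)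
      = E3 (ρ * σ) (π * σ) (ψ * σ) :=
  extR fun x y z => by simp [E3, F2, QT.thetaOp, AlgEquiv.mul_apply]

end galois

end GalP

open TensorProduct QT in
/-- Example 2.7: a Galois extension `K = k[T]/(P)` of `k` with primitive
element `t`, Galois group `G` and `P_σ := ∏_{τ ≠ σ} (t₁ − τ(t₂))/(σ(t₂) − τ(t₂))`, endowed
with the law `μ_K(x) = ∑_{σ ∈ G} P_σ ⊗ σ(x)` and `θ = Id`, is a `k`-torsor, and every
element of the Galois group is an automorphism of this torsor. -/
theorem galois_extension_isTorsor (k K : Type*) [Field k] [Field K] [Algebra k K]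
    [FiniteDimensional k K] [IsGalois k K]
    (t : K) (ht : IntermediateField.adjoin k {t} = ⊤) :
    IsTorsor k K (muGalois k K t) LinearMap.id ∧
    ∀ σ : K ≃ₐ[k] K, ∀ x : K,
      muGalois k K t (σ x)
        = map σ.toLinearMap (map (thetaOp k K σ.toLinearMap) σ.toLinearMap)
            (muGalois k K t x) := by
  constructor
  · refine ⟨GalP.mu_one ht, GalP.mu_mul ht, rfl, fun x y => rfl, ?_, ?_, ?_, ?_, ?_, ?_⟩
    · rw [LinearMap.id_coe]
      exact Function.bijective_id
    · -- left_law
      intro x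
      refine GalP.eq_of_E2 ht fun ρ π => ?_
      calc GalP.E2 ρ π (map LinearMap.id (mulOT k K) (muGalois k K t x))
          = GalP.E3 ρ π π (muGalois k K t x) := by rw [← GalP.Hll ρ π]; rfl
        _ = (π * π⁻¹ * ρ) x := GalP.LC ht ρ π π x
        _ = ρ x := by rw [show π * π⁻¹ * ρ = ρ from by group]
        _ = GalP.E2 ρ π (x ⊗ₜ[k] (1 : K)) := by simp [GalP.E2]
    · -- right_law
      intro x
      refine GalP.eq_of_E2 ht fun ρ π => ?_
      calc GalP.E2 ρ π (m12 k K (muGalois k K t x))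
          = GalP.E3 ρ ρ π (muGalois k K t x) := by rw [← GalP.Hrl ρ π]; rfl
        _ = (π * ρ⁻¹ * ρ) x := GalP.LC ht ρ ρ π x
        _ = π x := by rw [show π * ρ⁻¹ * ρ = π from by group]
        _ = GalP.E2 ρ π ((1 : K) ⊗ₜ[k] x) := by simp [GalP.E2]
    · -- coassoc
      intro x
      refine GalP.eq_of_E5 ht fun ρ π a b c => ?_
      have h3 := LinearMap.congr_fun (GalP.E5_mu3 ht ρ π a b c) (muGalois k K t x)
      have h1 := LinearMap.congr_fun (GalP.E5_mu1 ht ρ π a b c) (muGalois k K t x)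
      rw [LinearMap.comp_apply] at h3 h1
      rw [h3, h1, GalP.LC ht, GalP.LC ht]
      rw [show c * b⁻¹ * a * π⁻¹ * ρ = c * b⁻¹ * (a * π⁻¹ * ρ) from by group]
    · -- theta_law
      intro x
      rw [GalP.theta3_id, LinearMap.id_apply]
      refine GalP.eq_of_E5 ht fun ρ π a b c => ?_
      have h1 := LinearMap.congr_fun (GalP.E5_mu1 ht ρ π a b c) (muGalois k K t x)
      have h2 := LinearMap.congr_fun (GalP.E5_muMid ht ρ π a b c) (muGalois k K t x)
      rw [LinearMap.comp_apply] at h1 h2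
      rw [h1, h2, GalP.LC ht, GalP.LC ht]
      rw [show c * b⁻¹ * (a * π⁻¹ * ρ) = c * (π * a⁻¹ * b)⁻¹ * ρ from by group]
    · -- theta_compat
      intro x
      rw [GalP.thetaOp_id]
      simp
  · intro σ x
    refine GalP.eq_of_E3 ht fun ρ π ψ => ?_
    have h := LinearMap.congr_fun (GalP.Hequiv σ ρ π ψ) (muGalois k K t x)
    rw [LinearMap.comp_apply] at h
    rw [h, GalP.LC ht, GalP.LC ht, ← AlgEquiv.mul_apply]
    rw [show ψ * π⁻¹ * ρ * σ = ψ * σ * (π * σ)⁻¹ * (ρ * σ) from by group]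
end
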